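/- Let f : ℝ → ℝ be continuous with |f(s)| ≤ a(1 + |s|^{r−1}) for all s ∈ ℝ, where a > 0 and r > 1, set F(s) = ∫₀^s f(t) dt, and let 1 < ζ < r and δ > 0 be such that ζ F(s) ≥ f(s)s > 0 for all 0 < |s| ≤ δ. Then there exist constants M₂₃, M₂₄ > 0 such that F(s) ≥ M₂₃|s|^ζ − M₂₄|s|^r for all s ∈ ℝ. -/

import Mathlib

open Filter Set

lemma aux_key {ζ δ : ℝ} (f F : ℝ → ℝ)
    (hFd : ∀ x : ℝ, 0 < x → HasDerivAt F (f x) x)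
    (hyp : ∀ t : ℝ, 0 < t → t ≤ δ → f t * t ≤ ζ * F t) :
    ∀ s : ℝ, 0 < s → s ≤ δ → F δ * δ ^ (-ζ) * s ^ ζ ≤ F s := by
  intro s hs hsδ
  set g : ℝ → ℝ := fun t => F t * t ^ (-ζ) with hg
  have hgd : ∀ t : ℝ, 0 < t → HasDerivAt g (f t * t ^ (-ζ) + F t * (-ζ * t ^ (-ζ - 1))) t := by
    intro t ht
    exact (hFd t ht).mul (Real.hasDerivAt_rpow_const (Or.inl ht.ne'))
  have hmono : AntitoneOn g (Icc s δ) := by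
    apply antitoneOn_of_deriv_nonpos (convex_Icc s δ)
    · intro t ht
      have ht0 : 0 < t := lt_of_lt_of_le hs ht.1
      exact ((hFd t ht0).continuousAt.mul
        ((Real.continuousAt_rpow_const t (-ζ) (Or.inl ht0.ne')))).continuousWithinAt
    · intro t ht
      rw [interior_Icc] at ht
      exact ((hgd t (hs.trans ht.1)).differentiableAt).differentiableWithinAt
    · intro t ht
      rw [interior_Icc] at ht
      have ht0 : 0 < t := hs.trans ht.1
      rw [(hgd t ht0).deriv]
      have h1 : t ^ (-ζ) = t ^ (-ζ - 1) * t := by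
        rw [show (-ζ : ℝ) = -ζ - 1 + 1 by ring, Real.rpow_add ht0, Real.rpow_one]
        ring_nf
      have h2 : f t * t ^ (-ζ) + F t * (-ζ * t ^ (-ζ - 1))
          = t ^ (-ζ - 1) * (f t * t - ζ * F t) := by
        rw [h1]; ring
      rw [h2]
      have h3 : f t * t - ζ * F t ≤ 0 := sub_nonpos.mpr (hyp t ht0 ht.2.le)
      exact mul_nonpos_of_nonneg_of_nonpos (Real.rpow_pos_of_pos ht0 _).le h3
  have := hmono (left_mem_Icc.mpr hsδ) (right_mem_Icc.mpr hsδ) hsδ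
  have hspos : (0:ℝ) < s ^ ζ := Real.rpow_pos_of_pos hs _
  have key : F δ * δ ^ (-ζ) * s ^ ζ ≤ F s * s ^ (-ζ) * s ^ ζ :=
    mul_le_mul_of_nonneg_right this hspos.le
  calc F δ * δ ^ (-ζ) * s ^ ζ ≤ F s * s ^ (-ζ) * s ^ ζ := key
    _ = F s := by
        rw [mul_assoc, ← Real.rpow_add hs]
        norm_num

theorem global_unilateral_growth (a r ζ δ : ℝ)
    (ha : 0 < a) (hr : 1 < r) (hζ : 1 < ζ) (hζr : ζ < r) (hδ : 0 < δ)
    (f F : ℝ → ℝ) (hf : Continuous f)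
    (hgrowth : ∀ s : ℝ, |f s| ≤ a * (1 + |s| ^ (r - 1)))
    (hF : ∀ s : ℝ, F s = ∫ t in (0:ℝ)..s, f t)
    (hyp : ∀ s : ℝ, 0 < |s| → |s| ≤ δ → 0 < f s * s ∧ f s * s ≤ ζ * F s) :
    ∃ M₂₃ M₂₄ : ℝ, 0 < M₂₃ ∧ 0 < M₂₄ ∧
      ∀ s : ℝ, M₂₃ * |s| ^ ζ - M₂₄ * |s| ^ r ≤ F s := by
  have hζ0 : (0:ℝ) < ζ := by linarith
  -- F has derivative f everywhere
  have hFd : ∀ x : ℝ, HasDerivAt F (f x) x := by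
    intro x
    have h : HasDerivAt (fun u => ∫ t in (0:ℝ)..u, f t) (f x) x :=
      intervalIntegral.integral_hasDerivAt_right (hf.intervalIntegrable _ _)
        (hf.stronglyMeasurableAtFilter _ _) hf.continuousAt
    have hFe : F = fun u => ∫ t in (0:ℝ)..u, f t := funext hF
    rw [hFe]; exact h
  -- positive side
  have hpos : ∀ s : ℝ, 0 < s → s ≤ δ → F δ * δ ^ (-ζ) * s ^ ζ ≤ F s := by
    apply aux_key f F (fun x _ => hFd x)
    intro t ht htδ
    exact (hyp t (by rwa [abs_of_pos ht]) (by rwa [abs_of_pos ht])).2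
  -- negative side via reflection
  have hneg : ∀ s : ℝ, 0 < s → s ≤ δ →
      F (-δ) * δ ^ (-ζ) * s ^ ζ ≤ F (-s) := by
    apply aux_key (fun t => -f (-t)) (fun t => F (-t))
    · intro x _
      have h1 : HasDerivAt (fun t : ℝ => -t) (-1 : ℝ) x := (hasDerivAt_neg x)
      have := (hFd (-x)).comp x h1
      exact this.congr_deriv (by ring)
    · intro t ht htδ
      have habs : 0 < |(-t : ℝ)| := by rw [abs_neg, abs_of_pos ht]; exact ht
      have habs2 : |(-t : ℝ)| ≤ δ := by rw [abs_neg, abs_of_pos ht]; exact htδ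
      have := (hyp (-t) habs habs2).2
      calc -f (-t) * t = f (-t) * (-t) := by ring
        _ ≤ ζ * F (-t) := this
  -- positivity of F δ and F (-δ)
  have hFδ : 0 < F δ := by
    have h := hyp δ (by rw [abs_of_pos hδ]; exact hδ) (le_of_eq (abs_of_pos hδ))
    nlinarith [h.1, h.2]
  have hFnδ : 0 < F (-δ) := by
    have habs : 0 < |(-δ : ℝ)| := by rw [abs_neg, abs_of_pos hδ]; exact hδ
    have h := hyp (-δ) habs (by rw [abs_neg, abs_of_pos hδ])
    nlinarith [h.1, h.2]
  set c : ℝ := min (F δ * δ ^ (-ζ)) (F (-δ) * δ ^ (-ζ)) with hc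
  have hδζ : (0:ℝ) < δ ^ (-ζ) := Real.rpow_pos_of_pos hδ _
  have hc0 : 0 < c := lt_min (mul_pos hFδ hδζ) (mul_pos hFnδ hδζ)
  -- small interval bound
  have hsmall : ∀ s : ℝ, 0 < |s| → |s| ≤ δ → c * |s| ^ ζ ≤ F s := by
    intro s hs hsδ
    rcases lt_trichotomy s 0 with h | h | h
    · have hs' : 0 < -s := by linarith
      have := hneg (-s) hs' (by rwa [abs_of_neg h] at hsδ)
      rw [neg_neg] at this
      have : c * (-s) ^ ζ ≤ F s :=
        le_trans (mul_le_mul_of_nonneg_right (min_le_right _ _)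
          (Real.rpow_pos_of_pos hs' ζ).le) this
      rwa [abs_of_neg h]
    · simp [h] at hs
    · have := hpos s h (by rwa [abs_of_pos h] at hsδ)
      have : c * s ^ ζ ≤ F s :=
        le_trans (mul_le_mul_of_nonneg_right (min_le_left _ _)
          (Real.rpow_pos_of_pos h ζ).le) this
      rwa [abs_of_pos h]
  -- global bound on |F|
  have hFbound : ∀ s : ℝ, |F s| ≤ a * |s| + a * |s| ^ r := by
    intro s
    have hb : ∀ x ∈ Set.uIoc (0:ℝ) s, ‖f x‖ ≤ a * (1 + |s| ^ (r - 1)) := by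
      intro x hx
      have hxs : |x| ≤ |s| := by
        rcases Set.mem_uIoc.mp hx with h | h
        · rw [abs_of_pos h.1]
          exact le_trans h.2 (le_abs_self s)
        · rw [abs_of_nonpos h.2]
          calc -x ≤ -s := neg_le_neg h.1.le
            _ ≤ |s| := neg_le_abs s
      calc ‖f x‖ = |f x| := rfl
        _ ≤ a * (1 + |x| ^ (r - 1)) := hgrowth x
        _ ≤ a * (1 + |s| ^ (r - 1)) := by
            apply mul_le_mul_of_nonneg_left _ ha.le
            have := Real.rpow_le_rpow (abs_nonneg x) hxs (by linarith : (0:ℝ) ≤ r - 1)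
            linarith
    have := intervalIntegral.norm_integral_le_of_norm_le_const hb
    rw [← hF s] at this
    have habs : |F s| ≤ a * (1 + |s| ^ (r - 1)) * |s| := by
      simpa using this
    have hrw : |s| ^ (r - 1) * |s| = |s| ^ r := by
      rcases eq_or_lt_of_le (abs_nonneg s) with h | h
      · rw [← h]
        rw [Real.zero_rpow (by linarith : r - 1 ≠ 0), Real.zero_rpow (by linarith : r ≠ 0)]
        ring
      · rw [show r = r - 1 + 1 by ring, Real.rpow_add h, Real.rpow_one]
        ring_nf
    nlinarith [habs, hrw]
  refine ⟨c, c * δ ^ (ζ - r) + a * δ ^ (1 - r) + a, hc0, by positivity, ?_⟩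
  intro s
  rcases eq_or_lt_of_le (abs_nonneg s) with h0 | h0
  · -- s = 0
    have hs0 : s = 0 := abs_eq_zero.mp h0.symm
    have : F 0 = 0 := by rw [hF 0, intervalIntegral.integral_same]
    rw [hs0, this, abs_zero, Real.zero_rpow (by linarith : ζ ≠ 0),
      Real.zero_rpow (by linarith : r ≠ 0)]
    ring_nf
    exact le_refl 0
  rcases le_or_gt |s| δ with hsδ | hsδ
  · -- small
    have h1 := hsmall s h0 hsδ
    have h2 : 0 ≤ (c * δ ^ (ζ - r) + a * δ ^ (1 - r) + a) * |s| ^ r := by positivity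
    linarith
  · -- large
    have hA : |s| ^ ζ ≤ δ ^ (ζ - r) * |s| ^ r := by
      have h1 : |s| ^ (ζ - r) ≤ δ ^ (ζ - r) :=
        Real.rpow_le_rpow_of_nonpos hδ hsδ.le (by linarith)
      have h2 : |s| ^ ζ = |s| ^ (ζ - r) * |s| ^ r := by
        rw [← Real.rpow_add h0]; ring_nf
      rw [h2]
      exact mul_le_mul_of_nonneg_right h1 (Real.rpow_pos_of_pos h0 r).le
    have hB : |s| ≤ δ ^ (1 - r) * |s| ^ r := by
      have h1 : |s| ^ ((1:ℝ) - r) ≤ δ ^ ((1:ℝ) - r) :=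
        Real.rpow_le_rpow_of_nonpos hδ hsδ.le (by linarith)
      have h2 : |s| = |s| ^ ((1:ℝ) - r) * |s| ^ r := by
        rw [← Real.rpow_add h0]; norm_num
      calc |s| = |s| ^ ((1:ℝ) - r) * |s| ^ r := h2
        _ ≤ δ ^ (1 - r) * |s| ^ r :=
            mul_le_mul_of_nonneg_right h1 (Real.rpow_pos_of_pos h0 r).le
    have hFb := hFbound s
    have hFlow : -(a * |s| + a * |s| ^ r) ≤ F s := neg_le_of_abs_le hFb
    have : c * |s| ^ ζ ≤ c * (δ ^ (ζ - r) * |s| ^ r) :=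
      mul_le_mul_of_nonneg_left hA hc0.le
    nlinarith [hFlow, this, mul_le_mul_of_nonneg_left hB ha.le]
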